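/- Let Λ be a profinite commutative ring with a filtration by open ideals I_m (with ⋂ I_m = 0), and let C be a profinite Λ-module such that C/I_m C is a finitely generated Λ/I_m-module for every m, with the number of generators bounded independently of m. Then C is a finitely generated Λ-module (generalized Nakayama lemma). -/

import Mathlib

/-- generalized Nakayama lemma, Balister–Howson: Let `Λ` be a profinite
(compact Hausdorff topological) commutative ring with a filtration by open ideals `I m`
with `⋂ I m = 0`, and let `C` be a profinite (compact Hausdorff) topological `Λ`-module
such that each `C / I_m C` is generated over `Λ / I m` by at most `r` elements, with `r`
independent of `m`.  Then `C` is a finitely generated `Λ`-module. -/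
theorem stmt17 (Λ : Type*) [CommRing Λ] [TopologicalSpace Λ] [IsTopologicalRing Λ]
    [CompactSpace Λ] [T2Space Λ] [TotallyDisconnectedSpace Λ]
    (C : Type*) [AddCommGroup C] [Module Λ C] [TopologicalSpace C]
    [IsTopologicalAddGroup C] [CompactSpace C] [T2Space C] [TotallyDisconnectedSpace C]
    [ContinuousSMul Λ C]
    (I : ℕ → Ideal Λ) (hopen : ∀ m, IsOpen (I m : Set Λ))
    (hmono : ∀ m n, m ≤ n → I n ≤ I m)
    (hinter : ⨅ m, I m = ⊥)
    (r : ℕ)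
    (hfg : ∀ m, ∃ f : Fin r → C,
      Submodule.span Λ (Set.range f) ⊔ (I m • (⊤ : Submodule Λ C)) = ⊤) :
    Module.Finite Λ C := by
  classical
  have hsmul : Continuous fun p : Λ × C => p.1 • p.2 := continuous_smul
  -- Step A: every open neighbourhood of 0 in C contains an open submodule.
  have hbasis : ∀ O : Set C, IsOpen O → (0 : C) ∈ O →
      ∃ W : Submodule Λ C, IsOpen (W : Set C) ∧ (W : Set C) ⊆ O := by
    intro O hO h0
    obtain ⟨K, hK, h0K, hKO⟩ := compact_exists_isClopen_in_isOpen hO h0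
    obtain ⟨V, hV⟩ :=
      IsTopologicalAddGroup.exist_openAddSubgroup_sub_clopen_nhds_of_zero hK h0K
    set W' : Set C := {c | ∀ l : Λ, l • c ∈ (V : Set C)} with hW'
    have hWsubV : W' ⊆ (V : Set C) := fun c hc => by simpa using hc 1
    have hWopen : IsOpen W' := by
      have hcl : IsClosed (W'ᶜ) := by
        have : W'ᶜ = Prod.snd '' ((fun p : Λ × C => p.1 • p.2) ⁻¹' ((V : Set C)ᶜ)) := by
          ext c
          simp only [Set.mem_compl_iff, Set.mem_image, Set.mem_preimage, hW', Set.mem_setOf_eq,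
            not_forall, Prod.exists]
          constructor
          · rintro ⟨l, hl⟩; exact ⟨l, c, hl, rfl⟩
          · rintro ⟨l, c', hl, rfl⟩; exact ⟨l, hl⟩
        rw [this]
        exact isClosedMap_snd_of_compactSpace _
          (IsClosed.preimage hsmul (isClosed_compl_iff.2 V.isOpen))
      simpa using hcl.isOpen_compl
    refine ⟨{ carrier := W'
              add_mem' := ?_
              zero_mem' := ?_
              smul_mem' := ?_ }, hWopen, fun c hc => hKO (hV (hWsubV hc))⟩
    · intro a b ha hb l
      have := V.add_mem (ha l) (hb l)
      simpa [smul_add] using this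
    · intro l; simpa using V.zero_mem
    · intro a c hc l
      have := hc (l * a)
      simpa [mul_smul] using this
  -- Step B: every open submodule contains some `I m • ⊤`.
  have hB : ∀ U : Submodule Λ C, IsOpen (U : Set C) →
      ∃ m, (I m • (⊤ : Submodule Λ C)) ≤ U := by
    intro U hU
    set A : Set Λ := {a | ∀ c : C, a • c ∈ (U : Set C)} with hA
    have hAc : IsClosed (Aᶜ) := by
      have : Aᶜ = Prod.fst '' ((fun p : Λ × C => p.1 • p.2) ⁻¹' ((U : Set C)ᶜ)) := by
        ext a
        simp only [Set.mem_compl_iff, Set.mem_image, Set.mem_preimage, hA, Set.mem_setOf_eq,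
          not_forall, Prod.exists]
        constructor
        · rintro ⟨c, hc⟩; exact ⟨a, c, hc, rfl⟩
        · rintro ⟨a', c, hc, rfl⟩; exact ⟨c, hc⟩
      rw [this]
      exact isClosedMap_fst_of_compactSpace _
        (IsClosed.preimage hsmul (isClosed_compl_iff.2 hU))
    by_contra h
    push_neg at h
    have hne : ∀ m, ((I m : Set Λ) ∩ Aᶜ).Nonempty := by
      intro m
      rcases Set.eq_empty_or_nonempty ((I m : Set Λ) ∩ Aᶜ) with he | hne
      · exfalso
        apply h m
        rw [Submodule.smul_le]
        intro a ha n _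
        have haA : a ∈ A := by
          by_contra haA
          exact Set.eq_empty_iff_forall_notMem.1 he a ⟨ha, haA⟩
        exact haA n
      · exact hne
    have hclosed : ∀ m, IsClosed ((I m : Set Λ) ∩ Aᶜ) := fun m =>
      ((I m).toAddSubgroup.isClosed_of_isOpen (hopen m)).inter hAc
    have hdir : Directed (· ⊇ ·) fun m => ((I m : Set Λ) ∩ Aᶜ) := by
      intro m n
      refine ⟨max m n, Set.inter_subset_inter_left _ ?_, Set.inter_subset_inter_left _ ?_⟩
      · exact fun x hx => hmono m (max m n) (le_max_left _ _) hx
      · exact fun x hx => hmono n (max m n) (le_max_right _ _) hx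
    obtain ⟨a, ha⟩ := IsCompact.nonempty_iInter_of_directed_nonempty_isCompact_isClosed
      _ hdir hne (fun m => (hclosed m).isCompact) hclosed
    simp only [Set.mem_iInter, Set.mem_inter_iff] at ha
    have ha0 : a = 0 := by
      have : a ∈ (⨅ m, I m) := Submodule.mem_iInf _ |>.2 fun m => (ha m).1
      rwa [hinter, Ideal.mem_bot] at this
    have : a ∈ A := by
      rw [ha0]; intro c; simpa using U.zero_mem
    exact (ha 0).2 this
  -- Step C: compactness argument to find one tuple generating modulo every open submodule.
  let ι := {U : Submodule Λ C // IsOpen (U : Set C)}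
  haveI : Nonempty ι := ⟨⟨⊤, by simpa using isOpen_univ⟩⟩
  let t : ι → Set (Fin r → C) :=
    fun U => {f | Submodule.span Λ (Set.range f) ⊔ U.1 = ⊤}
  have ht_closed : ∀ U : ι, IsClosed (t U) := by
    intro U
    have hUc : IsClosed (U.1 : Set C) := U.1.toAddSubgroup.isClosed_of_isOpen U.2
    have : t U = ⋂ x : C, {f : Fin r → C |
        ∃ l : Fin r → Λ, x - ∑ i, l i • f i ∈ (U.1 : Set C)} := by
      ext f
      simp only [t, Set.mem_setOf_eq, Set.mem_iInter]
      constructor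
      · intro hf x
        have hx : x ∈ Submodule.span Λ (Set.range f) ⊔ U.1 := hf ▸ Submodule.mem_top
        obtain ⟨y, hy, z, hz, hyz⟩ := Submodule.mem_sup.1 hx
        obtain ⟨l, hl⟩ := (Submodule.mem_span_range_iff_exists_fun Λ).1 hy
        exact ⟨l, by rw [hl, ← hyz]; simpa using hz⟩
      · intro hf
        rw [Submodule.eq_top_iff']
        intro x
        obtain ⟨l, hl⟩ := hf x
        have hy : (∑ i, l i • f i) ∈ Submodule.span Λ (Set.range f) :=
          (Submodule.mem_span_range_iff_exists_fun Λ).2 ⟨l, rfl⟩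
        have : x = (∑ i, l i • f i) + (x - ∑ i, l i • f i) := by abel
        rw [this]
        exact Submodule.add_mem _ (Submodule.mem_sup_left hy) (Submodule.mem_sup_right hl)
    rw [this]
    refine isClosed_iInter fun x => ?_
    have : {f : Fin r → C | ∃ l : Fin r → Λ, x - ∑ i, l i • f i ∈ (U.1 : Set C)} =
        Prod.snd '' ((fun p : (Fin r → Λ) × (Fin r → C) => x - ∑ i, p.1 i • p.2 i)
          ⁻¹' (U.1 : Set C)) := by
      ext f
      simp only [Set.mem_setOf_eq, Set.mem_image, Set.mem_preimage, Prod.exists]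
      constructor
      · rintro ⟨l, hl⟩; exact ⟨l, f, hl, rfl⟩
      · rintro ⟨l, f', hl, rfl⟩; exact ⟨l, hl⟩
    rw [this]
    refine isClosedMap_snd_of_compactSpace _ (IsClosed.preimage ?_ hUc)
    exact continuous_const.sub (continuous_finset_sum _ fun i _ =>
      (((continuous_apply i).comp continuous_fst).smul
        ((continuous_apply i).comp continuous_snd)))
  have ht_ne : ∀ U : ι, (t U).Nonempty := by
    intro U
    obtain ⟨m, hm⟩ := hB U.1 U.2
    obtain ⟨f, hf⟩ := hfg m
    refine ⟨f, ?_⟩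
    have : (⊤ : Submodule Λ C) ≤ Submodule.span Λ (Set.range f) ⊔ U.1 := by
      rw [← hf]
      exact sup_le_sup_left hm _
    exact top_le_iff.1 this
  have ht_dir : Directed (· ⊇ ·) t := by
    intro U V
    refine ⟨⟨U.1 ⊓ V.1, U.2.inter V.2⟩, ?_, ?_⟩
    · intro f hf
      simp only [t, Set.mem_setOf_eq] at hf ⊢
      exact top_le_iff.1 (hf ▸ sup_le_sup_left inf_le_left _)
    · intro f hf
      simp only [t, Set.mem_setOf_eq] at hf ⊢
      exact top_le_iff.1 (hf ▸ sup_le_sup_left inf_le_right _)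
  obtain ⟨f, hf⟩ := IsCompact.nonempty_iInter_of_directed_nonempty_isCompact_isClosed
    t ht_dir ht_ne (fun U => (ht_closed U).isCompact) ht_closed
  simp only [Set.mem_iInter] at hf
  -- Step D: the span of `f` is closed, and is dense, hence everything.
  set N : Submodule Λ C := Submodule.span Λ (Set.range f) with hN
  have hNset : (N : Set C) = Set.range (fun l : Fin r → Λ => ∑ i, l i • f i) := by
    ext x
    simp only [hN, SetLike.mem_coe, Set.mem_range]
    exact Submodule.mem_span_range_iff_exists_fun Λ
  have hNclosed : IsClosed (N : Set C) := by
    rw [hNset]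
    refine (isCompact_range ?_).isClosed
    exact continuous_finset_sum _ fun i _ => (continuous_apply i).smul continuous_const
  have hNtop : N = ⊤ := by
    rw [Submodule.eq_top_iff']
    intro x
    have hxcl : x ∈ closure (N : Set C) := by
      rw [mem_closure_iff]
      intro O hO hxO
      have h0 : (0 : C) ∈ (fun y => x + y) ⁻¹' O := by simpa using hxO
      obtain ⟨W, hWopen, hWsub⟩ := hbasis _ (hO.preimage (continuous_const.add continuous_id)) h0
      have hfW := hf ⟨W, hWopen⟩
      simp only [t, Set.mem_setOf_eq] at hfW
      have hx : x ∈ N ⊔ W := hfW ▸ Submodule.mem_top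
      obtain ⟨y, hy, z, hz, hyz⟩ := Submodule.mem_sup.1 hx
      refine ⟨y, ?_, hy⟩
      have : (-z : C) ∈ (fun y => x + y) ⁻¹' O := hWsub (W.neg_mem hz)
      simpa [← hyz, add_comm, add_assoc, add_neg_cancel] using this
    rwa [hNclosed.closure_eq] at hxcl
  refine ⟨⟨(Set.finite_range f).toFinset, ?_⟩⟩
  rw [Set.Finite.coe_toFinset, ← hN, hNtop]
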